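/- For natural numbers K ≥ 1 and 1 ≤ m ≤ K, the sequence c_t = (C(K, t+1) - C(K-m, t+1)) / C(K, t), defined for t ∈ {0, 1, ..., K}, is nonincreasing in t. -/

import Mathlib

lemma cross_choose (K j t : ℕ) :
    (K - j).choose t * K.choose j = (K - t).choose j * K.choose t := by
  by_cases h : j + t ≤ K
  · have h1 := Nat.choose_mul (n := K) (k := j + t) (s := j) (Nat.le_add_right _ _)
    have h2 := Nat.choose_mul (n := K) (k := j + t) (s := t) (Nat.le_add_left _ _)
    rw [Nat.add_sub_cancel_left] at h1
    rw [Nat.add_sub_cancel] at h2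
    have hsymm : (j + t).choose j = (j + t).choose t := by
      have := Nat.choose_symm (show j ≤ j + t from Nat.le_add_right j t)
      simpa using this.symm
    rw [hsymm] at h1
    have h3 : K.choose j * (K - j).choose t = K.choose t * (K - t).choose j := by
      rw [← h1, ← h2]
    rw [Nat.mul_comm, h3, Nat.mul_comm]
  · push_neg at h
    by_cases ht : t ≤ K
    · have hj : K - t < j := by omega
      have h0 : (K - t).choose j = 0 := Nat.choose_eq_zero_of_lt hj
      by_cases hjK : j ≤ K
      · have : K - j < t := by omega
        rw [Nat.choose_eq_zero_of_lt this, h0]; ring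
      · rw [Nat.choose_eq_zero_of_lt (by omega : K < j), h0]; ring
    · have : K - j < t := by omega
      rw [Nat.choose_eq_zero_of_lt this, Nat.choose_eq_zero_of_lt (by omega : K < t)]; ring

lemma telescope (K m t : ℕ) (hmK : m ≤ K) :
    K.choose (t + 1) = (K - m).choose (t + 1) + ∑ j ∈ Finset.Icc 1 m, (K - j).choose t := by
  induction m with
  | zero => simp
  | succ m ih =>
    have hm : m ≤ K := by omega
    rw [ih hm, Finset.sum_Icc_succ_top (by omega)]
    have hK : K - m = (K - (m + 1)) + 1 := by omega
    rw [hK, Nat.choose_succ_succ]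
    ring

theorem stmt_3 (K m : ℕ) (hK : 1 ≤ K) (hm1 : 1 ≤ m) (hmK : m ≤ K)
    (c : ℕ → ℚ)
    (hc : ∀ t, c t = ((K.choose (t + 1) : ℚ) - ((K - m).choose (t + 1) : ℚ)) / (K.choose t : ℚ)) :
    ∀ t, t + 1 ≤ K → c (t + 1) ≤ c t := by
  have key : ∀ t, t ≤ K → c t = ∑ j ∈ Finset.Icc 1 m, ((K - t).choose j : ℚ) / (K.choose j : ℚ) := by
    intro t ht
    have hKt : (0 : ℚ) < K.choose t := by
      exact_mod_cast Nat.choose_pos ht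
    rw [hc t, telescope K m t hmK]
    push_cast
    rw [add_sub_cancel_left, Finset.sum_div]
    refine Finset.sum_congr rfl fun j hj => ?_
    simp only [Finset.mem_Icc] at hj
    have hKj : (0 : ℚ) < K.choose j := by
      exact_mod_cast Nat.choose_pos (le_trans hj.2 hmK)
    rw [div_eq_div_iff hKt.ne' hKj.ne']
    exact_mod_cast cross_choose K j t
  intro t ht
  rw [key t (by omega), key (t + 1) ht]
  refine Finset.sum_le_sum fun j hj => ?_
  have hKj : (0 : ℚ) < K.choose j := by
    simp only [Finset.mem_Icc] at hj
    exact_mod_cast Nat.choose_pos (le_trans hj.2 hmK)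
  gcongr
  omega
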